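/- arXiv:1409.7970 — 2 statements merged into one kernel-verified Lean document; each statement's English description precedes it below -/
import Mathlib

section
/- Let X, Y' be Banach spaces, A₀ ∈ L(X,Y') boundedly invertible and A_j ∈ L(X,Y') with β_j := ‖A₀⁻¹A_j‖_{L(X,X)} satisfying ∑_{j≥1} β_j ≤ κ < 2. For y ∈ [-1/2,1/2]^ℕ let A(y) = A₀ + ∑_{j≥1} y_j A_j and A^{(s)}(y) = A₀ + ∑_{j=1}^{s} y_j A_j. Then for every f ∈ Y' and every y ∈ [-1/2,1/2]^ℕ, the solutions u(y) = A(y)⁻¹ f and u_s(y) = A^{(s)}(y)⁻¹ f satisfy ‖u(y) - u_s(y)‖_X ≤ C ‖f‖_{Y'} ∑_{j≥s+1} β_j, where C depends only on κ and ‖A₀⁻¹‖. -/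
set_option maxHeartbeats 1000000


/-- dimension truncation error for the parametric solution:
‖u(y) - u_s(y)‖ ≤ C ‖f‖ ∑_{j ≥ s+1} β_j with C depending only on κ and ‖A₀⁻¹‖.
Indexing: `A j` stands for A_{j+1}, `y j` for y_{j+1}; the truncated operator
A^{(s)}(y) is `A₀ + ∑_{j ∈ range s} y j • A j` and the tail is `∑' j, β (s+j)`. -/
theorem stmt5
    {X Y' : Type*} [NormedAddCommGroup X] [NormedSpace ℝ X] [CompleteSpace X]
    [NormedAddCommGroup Y'] [NormedSpace ℝ Y'] [CompleteSpace Y']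
    (A₀ : X ≃L[ℝ] Y') (A : ℕ → X →L[ℝ] Y') (κ : ℝ) (hκ : κ < 2)
    (hsum : Summable fun j => ‖(A₀.symm : Y' →L[ℝ] X) ∘L A j‖)
    (hκsum : ∑' j, ‖(A₀.symm : Y' →L[ℝ] X) ∘L A j‖ ≤ κ) :
    ∃ C : ℝ, 0 < C ∧
      ∀ (f : Y') (y : ℕ → ℝ), (∀ j, |y j| ≤ 1 / 2) → ∀ s : ℕ, ∀ u us : X,
        ((A₀ : X →L[ℝ] Y') + ∑' j, y j • A j) u = f →
        ((A₀ : X →L[ℝ] Y') + ∑ j ∈ Finset.range s, y j • A j) us = f →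
        ‖u - us‖ ≤ C * ‖f‖ * ∑' j : ℕ, ‖(A₀.symm : Y' →L[ℝ] X) ∘L A (s + j)‖ := by
  set β : ℕ → ℝ := fun j => ‖(A₀.symm : Y' →L[ℝ] X) ∘L A j‖ with hβdef
  have hβ0 : ∀ j, 0 ≤ β j := fun j => norm_nonneg _
  have hκ0 : 0 ≤ κ := le_trans (tsum_nonneg hβ0) hκsum
  have h2 : 0 < 1 - κ / 2 := by linarith
  refine ⟨(‖(A₀.symm : Y' →L[ℝ] X)‖ + 1) / ((1 - κ / 2) ^ 2 * 2), by positivity, ?_⟩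
  intro f y hy s u us hu hus
  -- pointwise bound through A₀⁻¹
  have hBle : ∀ j (x : X), ‖(A₀.symm : Y' →L[ℝ] X) (A j x)‖ ≤ β j * ‖x‖ := by
    intro j x
    exact ((A₀.symm : Y' →L[ℝ] X) ∘L A j).le_opNorm x
  have hAnorm : ∀ j, ‖A j‖ ≤ ‖(A₀ : X →L[ℝ] Y')‖ * β j := by
    intro j
    have h : A j = (A₀ : X →L[ℝ] Y') ∘L ((A₀.symm : Y' →L[ℝ] X) ∘L A j) := by
      ext x; simp
    rw [h]
    exact ContinuousLinearMap.opNorm_comp_le _ _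
  -- summability of the operator series
  have hsummable : Summable fun j => y j • A j := by
    apply Summable.of_norm
    refine Summable.of_nonneg_of_le (fun j => norm_nonneg _) (fun j => ?_)
      (hsum.mul_left ‖(A₀ : X →L[ℝ] Y')‖)
    calc ‖y j • A j‖ ≤ ‖y j‖ * ‖A j‖ := ContinuousLinearMap.opNorm_smul_le _ _
      _ ≤ 1 * (‖(A₀ : X →L[ℝ] Y')‖ * β j) := by
          refine mul_le_mul ?_ (hAnorm j) (norm_nonneg _) one_pos.le
          rw [Real.norm_eq_abs]; exact le_trans (hy j) (by norm_num)
      _ = ‖(A₀ : X →L[ℝ] Y')‖ * β j := one_mul _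
  -- pointwise series c j = y j • A₀⁻¹ (A j v) in X
  have hb : ∀ (v : X) j, ‖y j • (A₀.symm : Y' →L[ℝ] X) (A j v)‖ ≤ (1/2) * (β j * ‖v‖) := by
    intro v j
    calc ‖y j • (A₀.symm : Y' →L[ℝ] X) (A j v)‖
        ≤ ‖y j‖ * ‖(A₀.symm : Y' →L[ℝ] X) (A j v)‖ := norm_smul_le _ _
      _ ≤ (1/2) * (β j * ‖v‖) := by
          rw [Real.norm_eq_abs]
          exact mul_le_mul (hy j) (hBle j v) (norm_nonneg _) (by norm_num)
  have hcn : ∀ v : X, Summable fun j => ‖y j • (A₀.symm : Y' →L[ℝ] X) (A j v)‖ := by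
    intro v
    exact Summable.of_nonneg_of_le (fun j => norm_nonneg _) (hb v)
      ((hsum.mul_right ‖v‖).mul_left (1/2))
  have hc : ∀ v : X, Summable fun j => y j • (A₀.symm : Y' →L[ℝ] X) (A j v) :=
    fun v => (hcn v).of_norm
  -- rewrite the equation for u
  have hSu : (∑' j, y j • A j) u = ∑' j, y j • A j u := by
    have := (ContinuousLinearMap.apply ℝ Y' u).map_tsum hsummable
    simpa using this
  have hguS : Summable fun j => y j • A j u := by
    have := (hc u).map ((A₀ : X →L[ℝ] Y') : X →ₗ[ℝ] Y') (A₀ : X →L[ℝ] Y').continuous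
    refine this.congr fun j => ?_
    simp
  have hueq : u + ∑' j, y j • (A₀.symm : Y' →L[ℝ] X) (A j u) = (A₀.symm : Y' →L[ℝ] X) f := by
    have h1 : (A₀ : X →L[ℝ] Y') u + ∑' j, y j • A j u = f := by
      rw [← hSu]; simpa using hu
    have := congrArg (A₀.symm : Y' →L[ℝ] X) h1
    rw [map_add, (A₀.symm : Y' →L[ℝ] X).map_tsum hguS] at this
    simpa using this
  have hκ'le : ∑' j, β j ≤ κ := hκsum
  -- bound on the full series at u
  have hcu_bound : ‖∑' j, y j • (A₀.symm : Y' →L[ℝ] X) (A j u)‖ ≤ (κ/2) * ‖u‖ := by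
    calc ‖∑' j, y j • (A₀.symm : Y' →L[ℝ] X) (A j u)‖
        ≤ ∑' j, ‖y j • (A₀.symm : Y' →L[ℝ] X) (A j u)‖ := norm_tsum_le_tsum_norm (hcn u)
      _ ≤ ∑' j, (1/2) * (β j * ‖u‖) :=
          Summable.tsum_le_tsum (hb u) (hcn u) ((hsum.mul_right ‖u‖).mul_left (1/2))
      _ = (1/2) * ((∑' j, β j) * ‖u‖) := by rw [tsum_mul_left, tsum_mul_right]
      _ ≤ (κ/2) * ‖u‖ := by nlinarith [norm_nonneg u]
  -- a priori bound on u
  have hunorm : ‖u‖ ≤ ‖(A₀.symm : Y' →L[ℝ] X)‖ * ‖f‖ / (1 - κ / 2) := by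
    have heq' : u = (A₀.symm : Y' →L[ℝ] X) f - ∑' j, y j • (A₀.symm : Y' →L[ℝ] X) (A j u) := by
      rw [← hueq]; abel
    have h1 : ‖u‖ ≤ ‖(A₀.symm : Y' →L[ℝ] X) f‖ + (κ/2) * ‖u‖ := by
      calc ‖u‖ = ‖(A₀.symm : Y' →L[ℝ] X) f - ∑' j, y j • (A₀.symm : Y' →L[ℝ] X) (A j u)‖ := by
            rw [← heq']
        _ ≤ ‖(A₀.symm : Y' →L[ℝ] X) f‖ + ‖∑' j, y j • (A₀.symm : Y' →L[ℝ] X) (A j u)‖ :=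
            norm_sub_le _ _
        _ ≤ _ := by linarith [hcu_bound]
    have h3 : ‖(A₀.symm : Y' →L[ℝ] X) f‖ ≤ ‖(A₀.symm : Y' →L[ℝ] X)‖ * ‖f‖ :=
      (A₀.symm : Y' →L[ℝ] X).le_opNorm f
    rw [le_div_iff₀ h2]
    nlinarith [norm_nonneg u]
  -- equation for us
  have huseq : us + ∑ j ∈ Finset.range s, y j • (A₀.symm : Y' →L[ℝ] X) (A j us)
      = (A₀.symm : Y' →L[ℝ] X) f := by
    have h1 : (A₀ : X →L[ℝ] Y') us + ∑ j ∈ Finset.range s, y j • A j us = f := by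
      have := hus
      simp only [ContinuousLinearMap.add_apply, ContinuousLinearMap.coe_sum',
        Finset.sum_apply, ContinuousLinearMap.smul_apply] at this ⊢
      exact this
    have := congrArg (A₀.symm : Y' →L[ℝ] X) h1
    rw [map_add, map_sum] at this
    simpa using this
  -- difference equation
  set w := u - us with hw
  have hdiff : w = -(∑' j, y (s + j) • (A₀.symm : Y' →L[ℝ] X) (A (s + j) u))
      - ∑ j ∈ Finset.range s, y j • (A₀.symm : Y' →L[ℝ] X) (A j w) := by
    have htail : (∑ j ∈ Finset.range s, y j • (A₀.symm : Y' →L[ℝ] X) (A j u))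
        + ∑' j, y (j + s) • (A₀.symm : Y' →L[ℝ] X) (A (j + s) u)
        = ∑' j, y j • (A₀.symm : Y' →L[ℝ] X) (A j u) := Summable.sum_add_tsum_nat_add s (hc u)
    have hts : (∑' j, y (j + s) • (A₀.symm : Y' →L[ℝ] X) (A (j + s) u))
        = ∑' j, y (s + j) • (A₀.symm : Y' →L[ℝ] X) (A (s + j) u) := by
      simp [add_comm]
    have heq := hueq
    rw [← htail, hts] at heq
    have hkey : (u + ((∑ j ∈ Finset.range s, y j • (A₀.symm : Y' →L[ℝ] X) (A j u))
          + ∑' j, y (s + j) • (A₀.symm : Y' →L[ℝ] X) (A (s + j) u)))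
        - (us + ∑ j ∈ Finset.range s, y j • (A₀.symm : Y' →L[ℝ] X) (A j us)) = 0 := by
      rw [heq, huseq]; abel
    have hsplit : ∑ j ∈ Finset.range s, y j • (A₀.symm : Y' →L[ℝ] X) (A j w)
        = (∑ j ∈ Finset.range s, y j • (A₀.symm : Y' →L[ℝ] X) (A j u))
          - ∑ j ∈ Finset.range s, y j • (A₀.symm : Y' →L[ℝ] X) (A j us) := by
      rw [← Finset.sum_sub_distrib]
      refine Finset.sum_congr rfl fun j _ => ?_
      rw [hw]; simp [smul_sub]
    rw [hw, hsplit]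
    have hz : (u - us) - (-(∑' j, y (s + j) • (A₀.symm : Y' →L[ℝ] X) (A (s + j) u))
          - ((∑ j ∈ Finset.range s, y j • (A₀.symm : Y' →L[ℝ] X) (A j u))
            - ∑ j ∈ Finset.range s, y j • (A₀.symm : Y' →L[ℝ] X) (A j us)))
        = (u + ((∑ j ∈ Finset.range s, y j • (A₀.symm : Y' →L[ℝ] X) (A j u))
          + ∑' j, y (s + j) • (A₀.symm : Y' →L[ℝ] X) (A (s + j) u)))
        - (us + ∑ j ∈ Finset.range s, y j • (A₀.symm : Y' →L[ℝ] X) (A j us)) := by abel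
    rw [hkey] at hz
    exact sub_eq_zero.mp hz
  -- tail sum and its bound
  set Ts := ∑' j : ℕ, β (s + j) with hTs
  have hTs0 : 0 ≤ Ts := tsum_nonneg fun j => hβ0 _
  have hβtailS : Summable fun j => β (s + j) := by
    have := hsum.comp_injective (add_right_injective s)
    simpa [Function.comp_def] using this
  have htailSn : Summable fun j => ‖y (s + j) • (A₀.symm : Y' →L[ℝ] X) (A (s + j) u)‖ := by
    have := (hcn u).comp_injective (add_right_injective s)
    simpa [Function.comp_def] using this
  have htailS : Summable fun j => y (s + j) • (A₀.symm : Y' →L[ℝ] X) (A (s + j) u) :=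
    htailSn.of_norm
  have htail_bound : ‖∑' j, y (s + j) • (A₀.symm : Y' →L[ℝ] X) (A (s + j) u)‖
      ≤ (1/2) * Ts * ‖u‖ := by
    calc ‖∑' j, y (s + j) • (A₀.symm : Y' →L[ℝ] X) (A (s + j) u)‖
        ≤ ∑' j, ‖y (s + j) • (A₀.symm : Y' →L[ℝ] X) (A (s + j) u)‖ :=
          norm_tsum_le_tsum_norm htailSn
      _ ≤ ∑' j, (1/2) * (β (s + j) * ‖u‖) :=
          Summable.tsum_le_tsum (fun j => hb u (s + j)) htailSn
            ((hβtailS.mul_right ‖u‖).mul_left (1/2))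
      _ = (1/2) * (Ts * ‖u‖) := by rw [tsum_mul_left, tsum_mul_right, hTs]
      _ = (1/2) * Ts * ‖u‖ := by ring
  -- finite sum bound
  have hfin_bound : ‖∑ j ∈ Finset.range s, y j • (A₀.symm : Y' →L[ℝ] X) (A j w)‖
      ≤ (κ/2) * ‖w‖ := by
    have hβsum_le : ∑ j ∈ Finset.range s, β j ≤ κ :=
      le_trans (Summable.sum_le_tsum (Finset.range s) (fun j _ => hβ0 j) hsum) hκ'le
    calc ‖∑ j ∈ Finset.range s, y j • (A₀.symm : Y' →L[ℝ] X) (A j w)‖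
        ≤ ∑ j ∈ Finset.range s, ‖y j • (A₀.symm : Y' →L[ℝ] X) (A j w)‖ := norm_sum_le _ _
      _ ≤ ∑ j ∈ Finset.range s, (1/2) * (β j * ‖w‖) := Finset.sum_le_sum fun j _ => hb w j
      _ = (1/2) * ((∑ j ∈ Finset.range s, β j) * ‖w‖) := by
          rw [← Finset.mul_sum, ← Finset.sum_mul]
      _ ≤ (κ/2) * ‖w‖ := by nlinarith [norm_nonneg w]
  -- put things together
  have hmain : (1 - κ/2) * ‖w‖ ≤ (1/2) * Ts * ‖u‖ := by
    have h1 : ‖w‖ ≤ (1/2) * Ts * ‖u‖ + (κ/2) * ‖w‖ := by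
      calc ‖w‖ = ‖-(∑' j, y (s + j) • (A₀.symm : Y' →L[ℝ] X) (A (s + j) u))
            - ∑ j ∈ Finset.range s, y j • (A₀.symm : Y' →L[ℝ] X) (A j w)‖ := by rw [← hdiff]
        _ ≤ ‖-(∑' j, y (s + j) • (A₀.symm : Y' →L[ℝ] X) (A (s + j) u))‖
            + ‖∑ j ∈ Finset.range s, y j • (A₀.symm : Y' →L[ℝ] X) (A j w)‖ := norm_sub_le _ _
        _ ≤ (1/2) * Ts * ‖u‖ + (κ/2) * ‖w‖ := by
            rw [norm_neg]
            exact add_le_add htail_bound hfin_bound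
    linarith
  have hfinal : ‖w‖ ≤ (1/2) * Ts * (‖(A₀.symm : Y' →L[ℝ] X)‖ * ‖f‖ / (1 - κ/2)) / (1 - κ/2) := by
    rw [le_div_iff₀ h2]
    calc ‖w‖ * (1 - κ/2) = (1 - κ/2) * ‖w‖ := by ring
      _ ≤ (1/2) * Ts * ‖u‖ := hmain
      _ ≤ (1/2) * Ts * (‖(A₀.symm : Y' →L[ℝ] X)‖ * ‖f‖ / (1 - κ/2)) := by
          have : 0 ≤ (1/2) * Ts := by positivity
          exact mul_le_mul_of_nonneg_left hunorm this
  calc ‖u - us‖ = ‖w‖ := by rw [hw]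
    _ ≤ (1/2) * Ts * (‖(A₀.symm : Y' →L[ℝ] X)‖ * ‖f‖ / (1 - κ/2)) / (1 - κ/2) := hfinal
    _ = ‖(A₀.symm : Y' →L[ℝ] X)‖ / ((1 - κ/2)^2 * 2) * ‖f‖ * Ts := by
        field_simp
    _ ≤ (‖(A₀.symm : Y' →L[ℝ] X)‖ + 1) / ((1 - κ/2)^2 * 2) * ‖f‖ * Ts := by
        gcongr
        linarith
end

section
/- Let X be a Banach space, B₁,…,B_s : X → X bounded with ∑_{j=1}^s ‖B_j‖ ≤ κ/2 < 1, and f ∈ X. For y ∈ [-1,1]^s define u(y) = (I + ∑_{j=1}^s y_j B_j)⁻¹ f. Then for every multi-index ν ∈ ℕ₀^s, ‖∂_y^ν u(y)‖_X ≤ |ν|! · (∏_{j=1}^s b_j^{ν_j}) · ‖f‖ / (1 - κ/2), where b_j = ‖B_j‖/(1-κ/2) and |ν| = ∑ ν_j. -/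
open Set List ContinuousLinearMap
set_option maxHeartbeats 800000
set_option synthInstance.maxHeartbeats 400000
section Stmt11Aux

variable {X : Type*} [NormedAddCommGroup X] [NormedSpace ℝ X] [CompleteSpace X] {s : ℕ}

noncomputable def stmt11L (B : Fin s → X →L[ℝ] X) : (Fin s → ℝ) →L[ℝ] (X →L[ℝ] X) :=
  ∑ j, (ContinuousLinearMap.proj j : (Fin s → ℝ) →L[ℝ] ℝ).smulRight (B j)

noncomputable def stmt11A (B : Fin s → X →L[ℝ] X) (y : Fin s → ℝ) : X →L[ℝ] X :=
  1 + ∑ j, y j • B j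

noncomputable def stmt11C (B : Fin s → X →L[ℝ] X) (y : Fin s → ℝ) : X →L[ℝ] X :=
  Ring.inverse (stmt11A B y)

theorem stmt11L_apply (B : Fin s → X →L[ℝ] X) (h : Fin s → ℝ) :
    stmt11L B h = ∑ j, h j • B j := by
  simp [stmt11L, ContinuousLinearMap.sum_apply]

theorem stmt11A_eq (B : Fin s → X →L[ℝ] X) :
    stmt11A B = fun y => (1 : X →L[ℝ] X) + stmt11L B y := by
  funext y; rw [stmt11A, stmt11L_apply]

theorem stmt11A_isUnit (B : Fin s → X →L[ℝ] X) (y : Fin s → ℝ)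
    (hy : ‖∑ j, y j • B j‖ < 1) : IsUnit (stmt11A B y) := by
  refine ⟨Units.oneSub (-(∑ j, y j • B j)) (by rwa [norm_neg]), ?_⟩
  simp [stmt11A, sub_neg_eq_add]

theorem stmt11C_hasFDerivAt (B : Fin s → X →L[ℝ] X) (y : Fin s → ℝ)
    (hy : ‖∑ j, y j • B j‖ < 1) :
    HasFDerivAt (stmt11C B)
      ((-(ContinuousLinearMap.mulLeftRight ℝ (X →L[ℝ] X) (stmt11C B y) (stmt11C B y))).comp
        (stmt11L B)) y := by
  have hU : IsUnit (stmt11A B y) := stmt11A_isUnit B y hy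
  have hA : HasFDerivAt (stmt11A B) (stmt11L B) y := by
    rw [stmt11A_eq]
    exact (stmt11L B).hasFDerivAt.const_add 1
  have hInv : HasFDerivAt Ring.inverse
      (-ContinuousLinearMap.mulLeftRight ℝ (X →L[ℝ] X) (stmt11C B y) (stmt11C B y))
      (stmt11A B y) := by
    have h1 := hasFDerivAt_ringInverse (𝕜 := ℝ) hU.unit
    have h2 : stmt11C B y = ((hU.unit⁻¹ : (X →L[ℝ] X)ˣ) : X →L[ℝ] X) := by
      have h3 := Ring.inverse_unit hU.unit
      rw [hU.unit_spec] at h3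
      exact h3
    rw [← h2] at h1
    rwa [hU.unit_spec] at h1
  exact hInv.comp y hA

noncomputable def stmt11W (B : Fin s → X →L[ℝ] X) (f : X) :
    List (Fin s) → (Fin s → ℝ) → X
  | [], y => stmt11C B y f
  | a :: l, y => - stmt11C B y ((B a) (stmt11W B f l y))

theorem stmt11L_single (B : Fin s → X →L[ℝ] X) (j : Fin s) :
    stmt11L B (Pi.single j 1) = B j := by
  rw [stmt11L_apply]
  rw [Fintype.sum_eq_single j (fun i hi => by simp [Pi.single_eq_of_ne hi])]
  simp

theorem stmt11C_mul (B : Fin s → X →L[ℝ] X) (y : Fin s → ℝ)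
    (hy : ‖∑ j, y j • B j‖ < 1) :
    stmt11C B y * stmt11A B y = 1 :=
  Ring.inverse_mul_cancel _ (stmt11A_isUnit B y hy)

theorem stmt11A_mul_C (B : Fin s → X →L[ℝ] X) (y : Fin s → ℝ)
    (hy : ‖∑ j, y j • B j‖ < 1) :
    stmt11A B y * stmt11C B y = 1 :=
  Ring.mul_inverse_cancel _ (stmt11A_isUnit B y hy)

theorem stmt11C_apply_le (B : Fin s → X →L[ℝ] X) (y : Fin s → ℝ) {c : ℝ}
    (hT : ‖∑ j, y j • B j‖ ≤ c) (hc : c < 1) (z : X) :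
    ‖stmt11C B y z‖ ≤ ‖z‖ / (1 - c) := by
  have hy : ‖∑ j, y j • B j‖ < 1 := lt_of_le_of_lt hT hc
  have h1 : stmt11C B y z + (∑ j, y j • B j) (stmt11C B y z) = z := by
    have := congrArg (fun M : X →L[ℝ] X => M z) (stmt11A_mul_C B y hy)
    simpa only [stmt11A, ContinuousLinearMap.mul_apply, ContinuousLinearMap.add_apply,
      ContinuousLinearMap.one_apply] using this
  have hw : stmt11C B y z = z - (∑ j, y j • B j) (stmt11C B y z) := eq_sub_of_add_eq h1
  have h2 : ‖stmt11C B y z‖ ≤ ‖z‖ + c * ‖stmt11C B y z‖ := by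
    have h3 : ‖z - (∑ j, y j • B j) (stmt11C B y z)‖ ≤
        ‖z‖ + ‖(∑ j, y j • B j) (stmt11C B y z)‖ := norm_sub_le _ _
    have h4 := (∑ j, y j • B j).le_opNorm (stmt11C B y z)
    rw [← hw] at h3
    nlinarith [norm_nonneg (stmt11C B y z)]
  rw [le_div_iff₀ (by linarith)]
  nlinarith [norm_nonneg (stmt11C B y z)]

theorem stmt11W_hasFDerivAt (B : Fin s → X →L[ℝ] X) (f : X) (y : Fin s → ℝ)
    (hy : ‖∑ j, y j • B j‖ < 1) (l : List (Fin s)) :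
    ∃ L : (Fin s → ℝ) →L[ℝ] X, HasFDerivAt (stmt11W B f l) L y ∧
      ∀ j, L (Pi.single j 1) =
        ((List.permutations'Aux j l).map (fun l' => stmt11W B f l' y)).sum := by
  induction l with
  | nil =>
    have hC := stmt11C_hasFDerivAt B y hy
    have h := hC.clm_apply (hasFDerivAt_const f y)
    refine ⟨_, h, fun j => ?_⟩
    simp only [ContinuousLinearMap.add_apply, ContinuousLinearMap.comp_apply,
      ContinuousLinearMap.zero_apply, map_zero, ContinuousLinearMap.flip_apply,
      ContinuousLinearMap.neg_apply, stmt11L_single,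
      ContinuousLinearMap.mulLeftRight_apply, zero_add]
    simp [List.permutations'Aux, stmt11W, ContinuousLinearMap.mul_apply]
  | cons a l ih =>
    obtain ⟨L, hL, hLj⟩ := ih
    have hu' : HasFDerivAt (fun z => (B a) (stmt11W B f l z)) ((B a).comp L) y :=
      (B a).hasFDerivAt.comp y hL
    have hg := (stmt11C_hasFDerivAt B y hy).clm_apply hu'
    refine ⟨_, hg.neg, fun j => ?_⟩
    have hCW : ∀ l' : List (Fin s),
        stmt11C B y ((B a) (stmt11W B f l' y)) = - stmt11W B f (a :: l') y := by
      intro l'; simp [stmt11W]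
    simp only [ContinuousLinearMap.neg_apply, ContinuousLinearMap.add_apply,
      ContinuousLinearMap.comp_apply, ContinuousLinearMap.flip_apply,
      stmt11L_single, ContinuousLinearMap.mulLeftRight_apply,
      ContinuousLinearMap.mul_apply, hLj j]
    rw [map_list_sum (B a), map_list_sum (stmt11C B y)]
    simp only [List.map_map]
    have h1 : ((List.permutations'Aux j l).map
        ((fun z => stmt11C B y z) ∘ (B a) ∘ fun l' => stmt11W B f l' y)).sum
        = - ((List.permutations'Aux j l).map
            (fun l' => stmt11W B f (a :: l') y)).sum := by
      have : ∀ (m : List (List (Fin s))) (g : List (Fin s) → X),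
          (m.map fun x => -g x).sum = -(m.map g).sum := by
        intro m g; induction m with
        | nil => simp
        | cons b m ih => simp [ih, neg_add]; abel
      rw [← this]
      apply congrArg
      apply List.map_congr_left
      intro l' _
      simp only [Function.comp_apply, hCW l']
    have h2 : stmt11C B y ((B j) (stmt11C B y ((B a) (stmt11W B f l y))))
        = stmt11W B f (j :: a :: l) y := by
      rw [hCW l]
      simp [stmt11W]
    rw [h1, h2]
    rw [show List.permutations'Aux j (a :: l)
        = (j :: a :: l) :: (List.permutations'Aux j l).map (fun l' => a :: l') from rfl]
    simp only [List.map_cons, List.sum_cons, List.map_map]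
    have h3 : ((List.permutations'Aux j l).map
        ((fun l' => stmt11W B f l' y) ∘ fun l' => a :: l'))
        = (List.permutations'Aux j l).map (fun l' => stmt11W B f (a :: l') y) := rfl
    rw [h3]
    abel

theorem stmt11_sumW_hasFDerivAt (B : Fin s → X →L[ℝ] X) (f : X) (y : Fin s → ℝ)
    (hy : ‖∑ j, y j • B j‖ < 1) (LL : List (List (Fin s))) :
    ∃ L : (Fin s → ℝ) →L[ℝ] X,
      HasFDerivAt (fun z => (LL.map (fun l => stmt11W B f l z)).sum) L y ∧
      ∀ j, L (Pi.single j 1) =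
        ((LL.flatMap (List.permutations'Aux j)).map (fun l => stmt11W B f l y)).sum := by
  induction LL with
  | nil => exact ⟨0, by simpa using hasFDerivAt_const (0 : X) y, fun j => by simp⟩
  | cons l LL ih =>
    obtain ⟨L₂, hL₂, hL₂j⟩ := ih
    obtain ⟨L₁, hL₁, hL₁j⟩ := stmt11W_hasFDerivAt B f y hy l
    refine ⟨L₁ + L₂, ?_, fun j => ?_⟩
    · exact hL₁.add hL₂
    · simp [ContinuousLinearMap.add_apply, hL₁j j, hL₂j j, List.flatMap_cons]

theorem stmt11W_norm_le (B : Fin s → X →L[ℝ] X) (f : X) {c : ℝ} (hc : c < 1)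
    (y : Fin s → ℝ) (hT : ‖∑ j, y j • B j‖ ≤ c) (l : List (Fin s)) :
    ‖stmt11W B f l y‖ ≤ (l.map fun a => ‖B a‖ / (1 - c)).prod * (‖f‖ / (1 - c)) := by
  induction l with
  | nil => simpa [stmt11W] using stmt11C_apply_le B y hT hc f
  | cons a l ih =>
    have h1 : ‖stmt11W B f (a :: l) y‖ ≤ ‖(B a) (stmt11W B f l y)‖ / (1 - c) := by
      rw [show stmt11W B f (a :: l) y = - stmt11C B y ((B a) (stmt11W B f l y)) from rfl,
        norm_neg]
      exact stmt11C_apply_le B y hT hc _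
    have h2 : ‖(B a) (stmt11W B f l y)‖ ≤ ‖B a‖ * ‖stmt11W B f l y‖ := (B a).le_opNorm _
    have hc' : (0:ℝ) < 1 - c := by linarith
    calc ‖stmt11W B f (a :: l) y‖ ≤ (‖B a‖ * ‖stmt11W B f l y‖) / (1 - c) := by
          apply le_trans h1; gcongr
    _ ≤ (‖B a‖ * ((l.map fun a => ‖B a‖ / (1 - c)).prod * (‖f‖ / (1 - c)))) / (1 - c) := by
          gcongr
    _ = ((a :: l).map fun a => ‖B a‖ / (1 - c)).prod * (‖f‖ / (1 - c)) := by
          simp only [List.map_cons, List.prod_cons]; ring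

theorem stmt11_list_norm_sum_le {α : Type*} (l : List α) (g : α → X) :
    ‖(l.map g).sum‖ ≤ (l.map fun a => ‖g a‖).sum := by
  induction l with
  | nil => simp
  | cons a l ih =>
    simp only [List.map_cons, List.sum_cons]
    exact le_trans (norm_add_le _ _) (by linarith)

end Stmt11Aux

/-- multi-parameter regularity bound: for
u(y) = (I + ∑_{j=1}^s y_j B_j)⁻¹ f on [-1,1]^s with ∑ ‖B_j‖ ≤ κ/2 < 1,
every mixed partial derivative ∂_y^ν u satisfies
‖∂_y^ν u(y)‖ ≤ |ν|! ∏_j b_j^{ν_j} ‖f‖/(1-κ/2) with b_j = ‖B_j‖/(1-κ/2).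
The mixed partial of order ν, with |ν| = n and directions recorded by
k : Fin n → Fin s (ν_j = #{i | k i = j}), is encoded as the n-th iterated
Fréchet derivative within the cube applied to the coordinate directions. -/
theorem stmt11
    {X : Type*} [NormedAddCommGroup X] [NormedSpace ℝ X] [CompleteSpace X]
    (s : ℕ) (B : Fin s → X →L[ℝ] X) (κ : ℝ) (hκ : κ < 2)
    (hsum : ∑ j, ‖B j‖ ≤ κ / 2) (f : X) (u : (Fin s → ℝ) → X)
    (hu : ∀ y : Fin s → ℝ, (∀ j, |y j| ≤ 1) →
      (1 + ∑ j, y j • B j) (u y) = f) :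
    ∀ (n : ℕ) (k : Fin n → Fin s), ∀ y : Fin s → ℝ, (∀ j, |y j| ≤ 1) →
      ‖iteratedFDerivWithin ℝ n u {y : Fin s → ℝ | ∀ j, |y j| ≤ 1} y
          (fun i => Pi.single (k i) 1)‖ ≤
        (n.factorial : ℝ) * (∏ i, ‖B (k i)‖ / (1 - κ / 2)) * ‖f‖ / (1 - κ / 2) := by
  set S : Set (Fin s → ℝ) := {y : Fin s → ℝ | ∀ j, |y j| ≤ 1} with hSdef
  have hc0 : (0:ℝ) ≤ κ / 2 := le_trans (Finset.sum_nonneg fun j _ => norm_nonneg _) hsum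
  have hc1 : κ / 2 < 1 := by linarith
  have hT : ∀ y ∈ S, ‖∑ j, y j • B j‖ ≤ κ / 2 := by
    intro y hy
    calc ‖∑ j, y j • B j‖ ≤ ∑ j, ‖y j • B j‖ := norm_sum_le _ _
    _ ≤ ∑ j, ‖B j‖ := by
        apply Finset.sum_le_sum
        intro j _
        calc ‖y j • B j‖ = |y j| * ‖B j‖ := by
              rw [norm_smul (y j) (B j), Real.norm_eq_abs]
        _ ≤ 1 * ‖B j‖ := by gcongr; exact hy j
        _ = ‖B j‖ := one_mul _
    _ ≤ κ / 2 := hsum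
  have hT1 : ∀ y ∈ S, ‖∑ j, y j • B j‖ < 1 := fun y hy => lt_of_le_of_lt (hT y hy) hc1
  have hUD : UniqueDiffOn ℝ S := by
    have : S = Set.pi univ (fun _ : Fin s => Icc (-1:ℝ) 1) := by
      ext y; simp [hSdef, Set.mem_pi, abs_le, Pi.le_def, forall_and]
    rw [this]
    exact UniqueDiffOn.pi fun i _ => uniqueDiffOn_Icc (by norm_num)
  have hEq : EqOn u (stmt11W B f []) S := by
    intro y hy
    have h1 : stmt11A B y (u y) = f := hu y hy
    have h2 := congrArg (fun M : X →L[ℝ] X => M (u y)) (stmt11C_mul B y (hT1 y hy))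
    simp only [ContinuousLinearMap.mul_apply, ContinuousLinearMap.one_apply] at h2
    rw [h1] at h2
    exact h2.symm
  have hvC : ∀ y, ‖∑ j, y j • B j‖ < 1 → ContDiffAt ℝ (⊤ : ℕ∞) (stmt11W B f []) y := by
    intro y hy
    have hA : ContDiff ℝ (⊤ : ℕ∞) (stmt11A B) := by
      rw [stmt11A_eq]
      exact contDiff_const.add (stmt11L B).contDiff
    have hU : IsUnit (stmt11A B y) := stmt11A_isUnit B y hy
    have hInv : ContDiffAt ℝ (⊤ : ℕ∞) Ring.inverse (stmt11A B y) := by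
      have := contDiffAt_ringInverse (𝕜 := ℝ) (n := (⊤ : ℕ∞)) hU.unit
      rwa [hU.unit_spec] at this
    have hC : ContDiffAt ℝ (⊤ : ℕ∞) (stmt11C B) y := hInv.comp y hA.contDiffAt
    exact hC.clm_apply contDiffAt_const
  have hvCD : ContDiffOn ℝ (⊤ : ℕ∞) (stmt11W B f []) S :=
    fun y hy => (hvC y (hT1 y hy)).contDiffWithinAt
  have hucd : ContDiffOn ℝ (⊤ : ℕ∞) u S := hvCD.congr hEq
  have key : ∀ (n : ℕ) (k : Fin n → Fin s), ∀ y ∈ S,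
      iteratedFDerivWithin ℝ n u S y (fun i => Pi.single (k i) 1) =
        ((List.ofFn k).permutations'.map (fun l => stmt11W B f l y)).sum := by
    intro n
    induction n with
    | zero =>
      intro k y hy
      rw [iteratedFDerivWithin_zero_apply]
      simp [List.permutations', hEq hy]
    | succ n ih =>
      intro k y hy
      rw [iteratedFDerivWithin_succ_apply_left]
      set dirs : Fin (n+1) → (Fin s → ℝ) := fun i => Pi.single (k i) 1 with hdirs
      set A := ContinuousMultilinearMap.apply ℝ (fun _ : Fin n => (Fin s → ℝ)) X
        (Fin.tail dirs) with hA
      have hdiff : DifferentiableWithinAt ℝ (iteratedFDerivWithin ℝ n u S) S y := by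
        refine (hucd.differentiableOn_iteratedFDerivWithin ?_ hUD) y hy
        exact_mod_cast WithTop.coe_lt_top _
      set F' := fderivWithin ℝ (iteratedFDerivWithin ℝ n u S) S y with hF'
      have h2 : HasFDerivWithinAt (fun z => A (iteratedFDerivWithin ℝ n u S z))
          (A.comp F') S y :=
        A.hasFDerivAt.comp_hasFDerivWithinAt y hdiff.hasFDerivWithinAt
      obtain ⟨Lsum, hLsum, hLsumj⟩ := stmt11_sumW_hasFDerivAt B f y (hT1 y hy)
        ((List.ofFn (fun i : Fin n => k i.succ)).permutations')
      have hEq2 : ∀ z ∈ S, (fun z => A (iteratedFDerivWithin ℝ n u S z)) z =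
          (fun z => (((List.ofFn (fun i : Fin n => k i.succ)).permutations').map
            (fun l => stmt11W B f l z)).sum) z := by
        intro z hz
        exact ih (fun i => k i.succ) z hz
      have h3 : HasFDerivWithinAt (fun z => A (iteratedFDerivWithin ℝ n u S z)) Lsum S y :=
        (hLsum.hasFDerivWithinAt).congr hEq2 (hEq2 y hy)
      have huniq : A.comp F' = Lsum := (hUD y hy).eq h2 h3
      have h4 : (F' (dirs 0)) (Fin.tail dirs) = (A.comp F') (dirs 0) := rfl
      rw [h4, huniq]
      have h5 : dirs 0 = Pi.single (k 0) 1 := rfl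
      rw [h5, hLsumj (k 0)]
      congr 1
      have h6 : List.ofFn k = k 0 :: List.ofFn (fun i : Fin n => k i.succ) :=
        List.ofFn_succ (f := k)
      rw [h6]
      rfl
  intro n k y hy
  rw [key n k y hy]
  have hbound : ∀ l ∈ (List.ofFn k).permutations',
      ‖stmt11W B f l y‖ ≤ (∏ i, ‖B (k i)‖ / (1 - κ / 2)) * (‖f‖ / (1 - κ / 2)) := by
    intro l hl
    have hperm : l ~ List.ofFn k := List.mem_permutations'.mp hl
    have h1 := stmt11W_norm_le B f hc1 y (hT y hy) l
    have h2 : (l.map fun a => ‖B a‖ / (1 - κ / 2)).prod =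
        ∏ i, ‖B (k i)‖ / (1 - κ / 2) := by
      rw [(hperm.map fun a => ‖B a‖ / (1 - κ / 2)).prod_eq, List.map_ofFn, List.prod_ofFn]
      rfl
    rwa [h2] at h1
  calc ‖(((List.ofFn k).permutations').map (fun l => stmt11W B f l y)).sum‖
      ≤ (((List.ofFn k).permutations').map
          (fun l => ‖stmt11W B f l y‖)).sum := by
        have := stmt11_list_norm_sum_le ((List.ofFn k).permutations')
          (fun l => stmt11W B f l y)
        simpa using this
    _ ≤ ((List.ofFn k).permutations').length •
          ((∏ i, ‖B (k i)‖ / (1 - κ / 2)) * (‖f‖ / (1 - κ / 2))) := by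
        refine le_trans (List.sum_le_card_nsmul _
          ((∏ i, ‖B (k i)‖ / (1 - κ / 2)) * (‖f‖ / (1 - κ / 2))) ?_) ?_
        · intro x hx
          obtain ⟨l, hl, rfl⟩ := List.mem_map.mp hx
          exact hbound l hl
        · simp [List.length_map]
    _ = (n.factorial : ℝ) * ((∏ i, ‖B (k i)‖ / (1 - κ / 2)) * (‖f‖ / (1 - κ / 2))) := by
        have hlen : ((List.ofFn k).permutations').length = n.factorial := by
          rw [← (List.permutations_perm_permutations' (List.ofFn k)).length_eq,
            List.length_permutations, List.length_ofFn]
        rw [hlen, nsmul_eq_mul]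
    _ = (n.factorial : ℝ) * (∏ i, ‖B (k i)‖ / (1 - κ / 2)) * ‖f‖ / (1 - κ / 2) := by
        ring
end
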